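/- The map sending a basketball B of order n to the partition of {0,...,4n-1} obtained by merging each quartet {i,j},{k,l} of B into a single block {i,j,k,l} is a bijection from the set of basketballs of order n onto the set of noncrossing partitions of {0,...,4n-1} into n blocks of size 4. -/

import Mathlib

open scoped Classical

def IsMatchingOn (M : Finset (Finset ℕ)) (S : Finset ℕ) : Prop :=
  (∀ b ∈ M, b.card = 2) ∧
  (∀ b ∈ M, ∀ b' ∈ M, b ≠ b' → Disjoint b b') ∧
  (∀ x, x ∈ S ↔ ∃ b ∈ M, x ∈ b)

def Cross (e o : Finset ℕ) : Prop :=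
  (∃ i ∈ e, ∃ k ∈ e, ∃ j ∈ o, ∃ l ∈ o, i < j ∧ j < k ∧ k < l) ∨
  (∃ i ∈ o, ∃ k ∈ o, ∃ j ∈ e, ∃ l ∈ e, i < j ∧ j < k ∧ k < l)

def IsNCMatchingOn (M : Finset (Finset ℕ)) (S : Finset ℕ) : Prop :=
  IsMatchingOn M S ∧ ∀ b ∈ M, ∀ b' ∈ M, b ≠ b' → ¬ Cross b b'

def En (n : ℕ) : Finset ℕ := (Finset.range (2 * n)).image (fun i => 2 * i)

def On (n : ℕ) : Finset ℕ := (Finset.range (2 * n)).image (fun i => 2 * i + 1)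

def IsBasketball (n : ℕ) (Be Bo : Finset (Finset ℕ)) : Prop :=
  IsNCMatchingOn Be (En n) ∧ IsNCMatchingOn Bo (On n) ∧
  ∀ e ∈ Be, (Bo.filter (fun o => Cross e o)).card = 1

def IsNCPartitionOn (Q : Finset (Finset ℕ)) (S : Finset ℕ) : Prop :=
  (∀ b ∈ Q, b.Nonempty) ∧
  (∀ b ∈ Q, ∀ b' ∈ Q, b ≠ b' → Disjoint b b') ∧
  (∀ x, x ∈ S ↔ ∃ b ∈ Q, x ∈ b) ∧
  (∀ b ∈ Q, ∀ b' ∈ Q, b ≠ b' → ¬ Cross b b')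

/-- Merge each even pair with the (unique) odd pair crossing it. -/
noncomputable def mergeQuartets (B : Finset (Finset ℕ) × Finset (Finset ℕ)) :
    Finset (Finset ℕ) :=
  B.1.image (fun e => e ∪ (B.2.filter (fun o => Cross e o)).biUnion id)

lemma cross_symm {A B : Finset ℕ} (h : Cross A B) : Cross B A := h.symm

lemma cross_mono {A A' B B' : Finset ℕ} (hA : A ⊆ A') (hB : B ⊆ B') (h : Cross A B) :
    Cross A' B' := by
  rcases h with ⟨i,hi,k,hk,j,hj,l,hl,h1,h2,h3⟩ | ⟨i,hi,k,hk,j,hj,l,hl,h1,h2,h3⟩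
  · exact Or.inl ⟨i, hA hi, k, hA hk, j, hB hj, l, hB hl, h1, h2, h3⟩
  · exact Or.inr ⟨i, hB hi, k, hB hk, j, hA hj, l, hA hl, h1, h2, h3⟩

lemma cross_pair_iff {a c : ℕ} (hac : a < c) (B : Finset ℕ) :
    Cross {a, c} B ↔ (∃ x ∈ B, a < x ∧ x < c) ∧ (∃ y ∈ B, y < a ∨ c < y) := by
  constructor
  · rintro (⟨i,hi,k,hk,j,hj,l,hl,h1,h2,h3⟩ | ⟨i,hi,k,hk,j,hj,l,hl,h1,h2,h3⟩)
    · simp only [Finset.mem_insert, Finset.mem_singleton] at hi hk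
      refine ⟨⟨j, hj, by omega⟩, ⟨l, hl, by omega⟩⟩
    · simp only [Finset.mem_insert, Finset.mem_singleton] at hj hl
      refine ⟨⟨k, hk, by omega⟩, ⟨i, hi, by omega⟩⟩
  · rintro ⟨⟨x, hx, hx1, hx2⟩, ⟨y, hy, hy'⟩⟩
    rcases hy' with hy' | hy'
    · exact Or.inr ⟨y, hy, x, hx, a, by simp, c, by simp, by omega, by omega, by omega⟩
    · exact Or.inl ⟨a, by simp, c, by simp, x, hx, y, hy, by omega, by omega, by omega⟩

lemma cross_quartet {a b c d : ℕ} {B : Finset ℕ} (hab : a < b) (hbc : b < c) (hcd : c < d)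
    (hdisj : ∀ x ∈ B, x ≠ a ∧ x ≠ b ∧ x ≠ c ∧ x ≠ d)
    (h : Cross {a, b, c, d} B) : Cross {a, c} B ∨ Cross {b, d} B := by
  by_contra hcon
  push_neg at hcon
  obtain ⟨h1, h2⟩ := hcon
  rw [cross_pair_iff (by omega)] at h1 h2
  push_neg at h1 h2
  have P : (∀ x ∈ B, ¬(a < x ∧ x < c)) ∨ (∀ x ∈ B, a ≤ x ∧ x ≤ c) := by
    by_cases hP : ∃ x ∈ B, a < x ∧ x < c
    · obtain ⟨x, hx, hx'⟩ := hP
      right; intro y hy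
      have := h1 ⟨x, hx, hx'⟩ y hy
      omega
    · push_neg at hP; left; intro x hx; have := hP x hx; omega
  have Q : (∀ x ∈ B, ¬(b < x ∧ x < d)) ∨ (∀ x ∈ B, b ≤ x ∧ x ≤ d) := by
    by_cases hQ : ∃ x ∈ B, b < x ∧ x < d
    · obtain ⟨x, hx, hx'⟩ := hQ
      right; intro y hy
      have := h2 ⟨x, hx, hx'⟩ y hy
      omega
    · push_neg at hQ; left; intro x hx; have := hQ x hx; omega
  rcases h with ⟨i,hi,k,hk,j,hj,l,hl,o1,o2,o3⟩ | ⟨i,hi,k,hk,j,hj,l,hl,o1,o2,o3⟩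
  · simp only [Finset.mem_insert, Finset.mem_singleton] at hi hk
    have dj := hdisj j hj
    have dl := hdisj l hl
    rcases P with P | P <;> rcases Q with Q | Q <;>
      [skip; skip; skip; skip] <;>
      · have pj := P j hj
        have qj := Q j hj
        have pl := P l hl
        have ql := Q l hl
        omega
  · simp only [Finset.mem_insert, Finset.mem_singleton] at hj hl
    have di := hdisj i hi
    have dk := hdisj k hk
    rcases P with P | P <;> rcases Q with Q | Q <;>
      · have pi := P i hi
        have qi := Q i hi
        have pk := P k hk
        have qk := Q k hk
        omega

lemma cross_interleave {a c b d : ℕ} (hac : a < c) (hbd : b < d)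
    (h : Cross {a, c} ({b, d} : Finset ℕ)) :
    (a < b ∧ b < c ∧ c < d) ∨ (b < a ∧ a < d ∧ d < c) := by
  rw [cross_pair_iff hac] at h
  obtain ⟨⟨x, hx, hx'⟩, ⟨y, hy, hy'⟩⟩ := h
  simp only [Finset.mem_insert, Finset.mem_singleton] at hx hy
  omega

lemma mem_En {n x : ℕ} : x ∈ En n ↔ x % 2 = 0 ∧ x < 4 * n := by
  simp only [En, Finset.mem_image, Finset.mem_range]
  constructor
  · rintro ⟨i, hi, rfl⟩; omega
  · rintro ⟨h1, h2⟩; exact ⟨x / 2, by omega, by omega⟩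

lemma mem_On {n x : ℕ} : x ∈ On n ↔ x % 2 = 1 ∧ x < 4 * n := by
  simp only [On, Finset.mem_image, Finset.mem_range]
  constructor
  · rintro ⟨i, hi, rfl⟩; omega
  · rintro ⟨h1, h2⟩; exact ⟨x / 2, by omega, by omega⟩

lemma card_En (n : ℕ) : (En n).card = 2 * n := by
  rw [En, Finset.card_image_of_injective _ (fun x y h => by omega), Finset.card_range]

lemma card_On (n : ℕ) : (On n).card = 2 * n := by
  rw [On, Finset.card_image_of_injective _ (fun x y h => by omega), Finset.card_range]

lemma pair_struct {M : Finset (Finset ℕ)} {S : Finset ℕ} (hM : IsMatchingOn M S)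
    {b : Finset ℕ} (hb : b ∈ M) : ∃ x y, x < y ∧ b = {x, y} := by
  obtain ⟨x, y, hxy, rfl⟩ := Finset.card_eq_two.mp (hM.1 b hb)
  rcases lt_or_gt_of_ne hxy with h | h
  · exact ⟨x, y, h, rfl⟩
  · exact ⟨y, x, h, Finset.pair_comm x y⟩

lemma card_matching {M : Finset (Finset ℕ)} {S : Finset ℕ} (hM : IsMatchingOn M S) :
    S.card = 2 * M.card := by
  have hS : S = M.biUnion (fun b => b) := by
    ext x
    simp only [Finset.mem_biUnion]
    exact hM.2.2 x
  rw [hS, Finset.card_biUnion (fun b hb b' hb' hne => hM.2.1 b hb b' hb' hne)]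
  rw [Finset.sum_congr rfl (fun b hb => hM.1 b hb),
    Finset.sum_const, smul_eq_mul]
  ring

lemma odd_pair_crossed {n : ℕ} {Be Bo : Finset (Finset ℕ)} (hB : IsBasketball n Be Bo)
    {o : Finset ℕ} (ho : o ∈ Bo) : ∃ e ∈ Be, Cross e o := by
  obtain ⟨j, l, hjl, rfl⟩ := pair_struct hB.2.1.1 ho
  have hjOn : j ∈ On n := (hB.2.1.1.2.2 j).mpr ⟨_, ho, by simp⟩
  have hlOn : l ∈ On n := (hB.2.1.1.2.2 l).mpr ⟨_, ho, by simp⟩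
  rw [mem_On] at hjOn hlOn
  by_contra hno
  push_neg at hno
  set Iev := (Finset.Ioo j l).filter (fun x => x % 2 = 0) with hIev
  set Iod := (Finset.Ioo j l).filter (fun x => x % 2 = 1) with hIod
  have claimE : ∀ e ∈ Be, ∀ x ∈ e, x ∈ Finset.Ioo j l → e ⊆ Finset.Ioo j l := by
    intro e he x hx hxI
    obtain ⟨a, c, hac, rfl⟩ := pair_struct hB.1.1 he
    have haE := (hB.1.1.2.2 a).mpr ⟨_, he, by simp⟩
    have hcE := (hB.1.1.2.2 c).mpr ⟨_, he, by simp⟩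
    rw [mem_En] at haE hcE
    simp only [Finset.mem_Ioo] at hxI
    intro y hy
    simp only [Finset.mem_insert, Finset.mem_singleton] at hx hy
    simp only [Finset.mem_Ioo]
    by_contra hyI
    refine hno _ he (cross_symm ?_)
    rw [cross_pair_iff hjl]
    refine ⟨⟨x, ?_, hxI⟩, ⟨y, ?_, by omega⟩⟩
    · simp only [Finset.mem_insert, Finset.mem_singleton]; tauto
    · simp only [Finset.mem_insert, Finset.mem_singleton]; tauto
  have claimO : ∀ o' ∈ Bo, ∀ x ∈ o', x ∈ Finset.Ioo j l → o' ⊆ Finset.Ioo j l := by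
    intro o' ho' x hx hxI
    simp only [Finset.mem_Ioo] at hxI
    have hne : ({j, l} : Finset ℕ) ≠ o' := by
      intro heq
      have : x ∈ ({j, l} : Finset ℕ) := heq ▸ hx
      simp only [Finset.mem_insert, Finset.mem_singleton] at this
      omega
    have hdisj := hB.2.1.1.2.1 _ ho o' ho' hne
    intro y hy
    simp only [Finset.mem_Ioo]
    by_contra hyI
    have hyjl : y ∉ ({j, l} : Finset ℕ) := Finset.disjoint_right.mp hdisj hy
    simp only [Finset.mem_insert, Finset.mem_singleton] at hyjl
    push_neg at hyjl
    refine hB.2.1.2 _ ho o' ho' hne ?_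
    rw [cross_pair_iff hjl]
    exact ⟨⟨x, hx, hxI⟩, ⟨y, hy, by omega⟩⟩
  have hEvCard : ∃ m, Iev.card = 2 * m := by
    have hunion : Iev = (Be.filter (fun e => e ⊆ Iev)).biUnion (fun b => b) := by
      ext x
      simp only [Finset.mem_biUnion, Finset.mem_filter]
      constructor
      · intro hx
        have hxIoo : x ∈ Finset.Ioo j l := (Finset.mem_filter.mp hx).1
        have hxEn : x ∈ En n := by
          rw [mem_En]
          have := (Finset.mem_filter.mp hx).2
          simp only [Finset.mem_Ioo] at hxIoo
          exact ⟨this, by omega⟩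
        obtain ⟨e, he, hxe⟩ := (hB.1.1.2.2 x).mp hxEn
        refine ⟨e, ⟨he, ?_⟩, hxe⟩
        intro y hy
        have hyIoo : y ∈ Finset.Ioo j l := claimE e he x hxe hxIoo hy
        have hyEn := (hB.1.1.2.2 y).mpr ⟨e, he, hy⟩
        rw [mem_En] at hyEn
        simp only [hIev, Finset.mem_filter]
        exact ⟨hyIoo, hyEn.1⟩
      · rintro ⟨e, ⟨he, hsub⟩, hxe⟩
        exact hsub hxe
    refine ⟨(Be.filter (fun e => e ⊆ Iev)).card, ?_⟩
    conv_lhs => rw [hunion]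
    rw [Finset.card_biUnion (fun b hb b' hb' hne =>
      hB.1.1.2.1 b (Finset.mem_filter.mp hb).1 b' (Finset.mem_filter.mp hb').1 hne)]
    rw [Finset.sum_congr rfl (fun b hb => hB.1.1.1 b (Finset.mem_filter.mp hb).1),
      Finset.sum_const, smul_eq_mul]
    ring
  have hOdCard : ∃ m, Iod.card = 2 * m := by
    have hunion : Iod = (Bo.filter (fun o' => o' ⊆ Iod)).biUnion (fun b => b) := by
      ext x
      simp only [Finset.mem_biUnion, Finset.mem_filter]
      constructor
      · intro hx
        have hxIoo : x ∈ Finset.Ioo j l := (Finset.mem_filter.mp hx).1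
        have hxOn : x ∈ On n := by
          rw [mem_On]
          have := (Finset.mem_filter.mp hx).2
          simp only [Finset.mem_Ioo] at hxIoo
          exact ⟨this, by omega⟩
        obtain ⟨e, he, hxe⟩ := (hB.2.1.1.2.2 x).mp hxOn
        refine ⟨e, ⟨he, ?_⟩, hxe⟩
        intro y hy
        have hyIoo : y ∈ Finset.Ioo j l := claimO e he x hxe hxIoo hy
        have hyOn := (hB.2.1.1.2.2 y).mpr ⟨e, he, hy⟩
        rw [mem_On] at hyOn
        simp only [hIod, Finset.mem_filter]
        exact ⟨hyIoo, hyOn.1⟩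
      · rintro ⟨e, ⟨he, hsub⟩, hxe⟩
        exact hsub hxe
    refine ⟨(Bo.filter (fun o' => o' ⊆ Iod)).card, ?_⟩
    conv_lhs => rw [hunion]
    rw [Finset.card_biUnion (fun b hb b' hb' hne =>
      hB.2.1.1.2.1 b (Finset.mem_filter.mp hb).1 b' (Finset.mem_filter.mp hb').1 hne)]
    rw [Finset.sum_congr rfl (fun b hb => hB.2.1.1.1 b (Finset.mem_filter.mp hb).1),
      Finset.sum_const, smul_eq_mul]
    ring
  have hkey : Iev = insert (j + 1) (Iod.image (· + 1)) := by
    ext x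
    simp only [hIev, hIod, Finset.mem_insert, Finset.mem_image, Finset.mem_filter,
      Finset.mem_Ioo]
    constructor
    · rintro ⟨⟨h1, h2⟩, h3⟩
      by_cases hx : x = j + 1
      · exact Or.inl hx
      · exact Or.inr ⟨x - 1, ⟨⟨by omega, by omega⟩, by omega⟩, by omega⟩
    · rintro (rfl | ⟨y, ⟨⟨h1, h2⟩, h3⟩, rfl⟩)
      · refine ⟨⟨by omega, by omega⟩, by omega⟩
      · exact ⟨⟨by omega, by omega⟩, by omega⟩
  have hnotmem : (j + 1) ∉ Iod.image (· + 1) := by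
    simp only [Finset.mem_image, hIod, Finset.mem_filter, Finset.mem_Ioo]
    rintro ⟨y, ⟨⟨h1, h2⟩, h3⟩, h4⟩
    omega
  have hcards : Iev.card = Iod.card + 1 := by
    rw [hkey, Finset.card_insert_of_notMem hnotmem,
      Finset.card_image_of_injective _ (fun x y h => by omega)]
  obtain ⟨m1, hm1⟩ := hEvCard
  obtain ⟨m2, hm2⟩ := hOdCard
  omega

lemma card_Be {n : ℕ} {Be Bo : Finset (Finset ℕ)} (hB : IsBasketball n Be Bo) :
    Be.card = n := by
  have := card_matching hB.1.1; rw [card_En] at this; omega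

lemma card_Bo {n : ℕ} {Be Bo : Finset (Finset ℕ)} (hB : IsBasketball n Be Bo) :
    Bo.card = n := by
  have := card_matching hB.2.1.1; rw [card_On] at this; omega

lemma cross_unique_o {n : ℕ} {Be Bo : Finset (Finset ℕ)} (hB : IsBasketball n Be Bo)
    {o : Finset ℕ} (ho : o ∈ Bo) : (Be.filter (fun e => Cross e o)).card = 1 := by
  have hsum : ∑ o' ∈ Bo, (Be.filter (fun e => Cross e o')).card
      = ∑ e ∈ Be, (Bo.filter (fun o' => Cross e o')).card := by
    simp only [Finset.card_filter]
    exact Finset.sum_comm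
  have hrhs : ∑ e ∈ Be, (Bo.filter (fun o' => Cross e o')).card = Be.card := by
    rw [Finset.sum_congr rfl (fun e he => hB.2.2 e he), Finset.sum_const, smul_eq_mul,
      mul_one]
  have hge : ∀ o' ∈ Bo, 1 ≤ (Be.filter (fun e => Cross e o')).card := by
    intro o' ho'
    obtain ⟨e, he, hc⟩ := odd_pair_crossed hB ho'
    exact Finset.card_pos.mpr ⟨e, Finset.mem_filter.mpr ⟨he, hc⟩⟩
  by_contra hne
  have h1 : 1 < (Be.filter (fun e => Cross e o)).card := by
    have := hge o ho; omega
  have hlt : ∑ o' ∈ Bo, (1 : ℕ) < ∑ o' ∈ Bo, (Be.filter (fun e => Cross e o')).card :=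
    Finset.sum_lt_sum hge ⟨o, ho, h1⟩
  rw [Finset.sum_const, smul_eq_mul, mul_one] at hlt
  rw [hsum, hrhs, card_Be hB, card_Bo hB] at hlt
  omega

lemma quartet_spec {n : ℕ} {Be Bo : Finset (Finset ℕ)} (hB : IsBasketball n Be Bo)
    {e : Finset ℕ} (he : e ∈ Be) :
    ∃ o, o ∈ Bo ∧ Cross e o ∧ Bo.filter (fun o' => Cross e o') = {o} := by
  obtain ⟨o, ho⟩ := Finset.card_eq_one.mp (hB.2.2 e he)
  have hmem : o ∈ Bo.filter (fun o' => Cross e o') := ho ▸ Finset.mem_singleton_self o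
  rw [Finset.mem_filter] at hmem
  exact ⟨o, hmem.1, hmem.2, ho⟩

lemma e_unique {n : ℕ} {Be Bo : Finset (Finset ℕ)} (hB : IsBasketball n Be Bo)
    {e e' o : Finset ℕ} (he : e ∈ Be) (he' : e' ∈ Be) (ho : o ∈ Bo)
    (h1 : Cross e o) (h2 : Cross e' o) : e = e' := by
  have hc := cross_unique_o hB ho
  have hle : (Be.filter (fun e => Cross e o)).card ≤ 1 := le_of_eq hc
  exact Finset.card_le_one.mp hle e (Finset.mem_filter.mpr ⟨he, h1⟩)
    e' (Finset.mem_filter.mpr ⟨he', h2⟩)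

lemma o_unique {n : ℕ} {Be Bo : Finset (Finset ℕ)} (hB : IsBasketball n Be Bo)
    {e o o' : Finset ℕ} (he : e ∈ Be) (ho : o ∈ Bo) (ho' : o' ∈ Bo)
    (h1 : Cross e o) (h2 : Cross e o') : o = o' := by
  have hc := hB.2.2 e he
  have hle : (Bo.filter (fun o' => Cross e o')).card ≤ 1 := le_of_eq hc
  exact Finset.card_le_one.mp hle o (Finset.mem_filter.mpr ⟨ho, h1⟩)
    o' (Finset.mem_filter.mpr ⟨ho', h2⟩)

lemma even_mem {n : ℕ} {Be Bo : Finset (Finset ℕ)} (hB : IsBasketball n Be Bo)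
    {e : Finset ℕ} {x : ℕ} (he : e ∈ Be) (hx : x ∈ e) : x % 2 = 0 ∧ x < 4 * n :=
  mem_En.mp ((hB.1.1.2.2 x).mpr ⟨e, he, hx⟩)

lemma odd_mem {n : ℕ} {Be Bo : Finset (Finset ℕ)} (hB : IsBasketball n Be Bo)
    {o : Finset ℕ} {x : ℕ} (ho : o ∈ Bo) (hx : x ∈ o) : x % 2 = 1 ∧ x < 4 * n :=
  mem_On.mp ((hB.2.1.1.2.2 x).mpr ⟨o, ho, hx⟩)

lemma quartet_disjoint {n : ℕ} {Be Bo : Finset (Finset ℕ)} (hB : IsBasketball n Be Bo)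
    {e e' o o' : Finset ℕ} (he : e ∈ Be) (he' : e' ∈ Be) (ho : o ∈ Bo) (ho' : o' ∈ Bo)
    (hc : Cross e o) (hc' : Cross e' o') (hne : e ≠ e') :
    ∀ x, x ∈ e ∪ o → x ∈ e' ∪ o' → False := by
  intro x hx hx'
  rw [Finset.mem_union] at hx hx'
  rcases hx with hx | hx <;> rcases hx' with hx' | hx'
  · exact Finset.disjoint_left.mp (hB.1.1.2.1 e he e' he' hne) hx hx'
  · have h1 := even_mem hB he hx; have h2 := odd_mem hB ho' hx'; omega
  · have h1 := odd_mem hB ho hx; have h2 := even_mem hB he' hx'; omega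
  · have hoo : o ≠ o' := fun h => hne (e_unique hB he he' ho hc (h ▸ hc'))
    exact Finset.disjoint_left.mp (hB.2.1.1.2.1 o ho o' ho' hoo) hx hx'

lemma quartet_struct {n : ℕ} {Be Bo : Finset (Finset ℕ)} (hB : IsBasketball n Be Bo)
    {e o : Finset ℕ} (he : e ∈ Be) (ho : o ∈ Bo) (hc : Cross e o) :
    ∃ p q r s, p < q ∧ q < r ∧ r < s ∧ e ∪ o = {p, q, r, s} ∧
      (({p, r} = e ∧ {q, s} = o) ∨ ({p, r} = o ∧ {q, s} = e)) := by
  obtain ⟨a, c, hac, rfl⟩ := pair_struct hB.1.1 he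
  obtain ⟨b, d, hbd, rfl⟩ := pair_struct hB.2.1.1 ho
  rcases cross_interleave hac hbd hc with ⟨h1, h2, h3⟩ | ⟨h1, h2, h3⟩
  · refine ⟨a, b, c, d, h1, h2, h3, ?_, Or.inl ⟨rfl, rfl⟩⟩
    ext x
    simp only [Finset.mem_union, Finset.mem_insert, Finset.mem_singleton]
    tauto
  · refine ⟨b, a, d, c, h1, h2, h3, ?_, Or.inr ⟨rfl, rfl⟩⟩
    ext x
    simp only [Finset.mem_union, Finset.mem_insert, Finset.mem_singleton]
    tauto

lemma cross_quartet_pair {n : ℕ} {Be Bo : Finset (Finset ℕ)} (hB : IsBasketball n Be Bo)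
    {e o Y : Finset ℕ} (he : e ∈ Be) (ho : o ∈ Bo) (hc : Cross e o)
    (hd : ∀ x ∈ Y, x ∉ e ∪ o) (h : Cross (e ∪ o) Y) : Cross e Y ∨ Cross o Y := by
  obtain ⟨p, q, r, s, h1, h2, h3, hun, hcase⟩ := quartet_struct hB he ho hc
  rw [hun] at h
  have hd' : ∀ x ∈ Y, x ≠ p ∧ x ≠ q ∧ x ≠ r ∧ x ≠ s := by
    intro x hx
    have := hd x hx
    rw [hun] at this
    simp only [Finset.mem_insert, Finset.mem_singleton] at this
    push_neg at this
    exact this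
  have := cross_quartet h1 h2 h3 hd' h
  rcases hcase with ⟨hpr, hqs⟩ | ⟨hpr, hqs⟩
  · rw [hpr, hqs] at this; exact this
  · rw [hpr, hqs] at this; exact this.symm

lemma quartet_noncross {n : ℕ} {Be Bo : Finset (Finset ℕ)} (hB : IsBasketball n Be Bo)
    {e e' o o' : Finset ℕ} (he : e ∈ Be) (he' : e' ∈ Be) (ho : o ∈ Bo) (ho' : o' ∈ Bo)
    (hc : Cross e o) (hc' : Cross e' o') (hne : e ≠ e') : ¬ Cross (e ∪ o) (e' ∪ o') := by
  intro h
  have hd1 : ∀ x ∈ e' ∪ o', x ∉ e ∪ o := fun x hx hx' =>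
    quartet_disjoint hB he' he ho' ho hc' hc (Ne.symm hne) x hx hx'
  rcases cross_quartet_pair hB he ho hc hd1 h with h1 | h1
  · have hd2 : ∀ x ∈ e, x ∉ e' ∪ o' := fun x hx hx' =>
      quartet_disjoint hB he he' ho ho' hc hc' hne x (Finset.mem_union_left _ hx) hx'
    rcases cross_quartet_pair hB he' ho' hc' hd2 (cross_symm h1) with h2 | h2
    · exact hB.1.2 e he e' he' hne (cross_symm h2)
    · have hoo : o = o' := o_unique hB he ho ho' hc (cross_symm h2)
      exact hne (e_unique hB he he' ho' (hoo ▸ hc) hc')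
  · have hd2 : ∀ x ∈ o, x ∉ e' ∪ o' := fun x hx hx' =>
      quartet_disjoint hB he he' ho ho' hc hc' hne x (Finset.mem_union_right _ hx) hx'
    rcases cross_quartet_pair hB he' ho' hc' hd2 (cross_symm h1) with h2 | h2
    · exact hne (e_unique hB he he' ho hc h2)
    · have hoo : o ≠ o' := fun hoo => hne (e_unique hB he he' ho hc (hoo ▸ hc'))
      exact hB.2.1.2 o ho o' ho' hoo (cross_symm h2)

lemma merge_mem_iff {n : ℕ} {Be Bo : Finset (Finset ℕ)} (hB : IsBasketball n Be Bo)
    {b : Finset ℕ} :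
    b ∈ mergeQuartets (Be, Bo) ↔ ∃ e o, e ∈ Be ∧ o ∈ Bo ∧ Cross e o ∧ b = e ∪ o := by
  simp only [mergeQuartets, Finset.mem_image]
  constructor
  · rintro ⟨e, he, rfl⟩
    obtain ⟨o, ho, hc, hfil⟩ := quartet_spec hB he
    refine ⟨e, o, he, ho, hc, ?_⟩
    rw [hfil, Finset.singleton_biUnion, id]
  · rintro ⟨e, o, he, ho, hc, rfl⟩
    obtain ⟨o₀, ho₀, hc₀, hfil⟩ := quartet_spec hB he
    have : o = o₀ := o_unique hB he ho ho₀ hc hc₀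
    subst this
    exact ⟨e, he, by rw [hfil, Finset.singleton_biUnion, id]⟩

lemma forward_dir {n : ℕ} {Be Bo : Finset (Finset ℕ)} (hB : IsBasketball n Be Bo) :
    IsNCPartitionOn (mergeQuartets (Be, Bo)) (Finset.range (4 * n)) ∧
    (mergeQuartets (Be, Bo)).card = n ∧ ∀ b ∈ mergeQuartets (Be, Bo), b.card = 4 := by
  have hdisj' : ∀ e o : Finset ℕ, e ∈ Be → o ∈ Bo → Disjoint e o := by
    intro e o he ho
    rw [Finset.disjoint_left]
    intro x hx hx'
    have h1 := even_mem hB he hx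
    have h2 := odd_mem hB ho hx'
    omega
  refine ⟨⟨?_, ?_, ?_, ?_⟩, ?_, ?_⟩
  · -- nonempty
    intro b hb
    obtain ⟨e, o, he, ho, hc, rfl⟩ := (merge_mem_iff hB).mp hb
    have := hB.1.1.1 e he
    have hne : e.Nonempty := Finset.card_pos.mp (by omega)
    exact hne.mono Finset.subset_union_left
  · -- pairwise disjoint
    intro b hb b' hb' hbb
    obtain ⟨e, o, he, ho, hc, rfl⟩ := (merge_mem_iff hB).mp hb
    obtain ⟨e', o', he', ho', hc', rfl⟩ := (merge_mem_iff hB).mp hb'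
    have hne : e ≠ e' := by
      rintro rfl
      exact hbb (by rw [o_unique hB he ho ho' hc hc'])
    rw [Finset.disjoint_left]
    intro x hx hx'
    exact quartet_disjoint hB he he' ho ho' hc hc' hne x hx hx'
  · -- cover
    intro x
    rw [Finset.mem_range]
    constructor
    · intro hx
      by_cases hpar : x % 2 = 0
      · obtain ⟨e, he, hxe⟩ := (hB.1.1.2.2 x).mp (mem_En.mpr ⟨hpar, hx⟩)
        obtain ⟨o, ho, hc, _⟩ := quartet_spec hB he
        exact ⟨e ∪ o, (merge_mem_iff hB).mpr ⟨e, o, he, ho, hc, rfl⟩,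
          Finset.mem_union_left _ hxe⟩
      · obtain ⟨o, ho, hxo⟩ := (hB.2.1.1.2.2 x).mp (mem_On.mpr ⟨by omega, hx⟩)
        obtain ⟨e, he, hc⟩ := odd_pair_crossed hB ho
        exact ⟨e ∪ o, (merge_mem_iff hB).mpr ⟨e, o, he, ho, hc, rfl⟩,
          Finset.mem_union_right _ hxo⟩
    · rintro ⟨b, hb, hxb⟩
      obtain ⟨e, o, he, ho, hc, rfl⟩ := (merge_mem_iff hB).mp hb
      rw [Finset.mem_union] at hxb
      rcases hxb with hx | hx
      · exact (even_mem hB he hx).2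
      · exact (odd_mem hB ho hx).2
  · -- noncrossing
    intro b hb b' hb' hbb
    obtain ⟨e, o, he, ho, hc, rfl⟩ := (merge_mem_iff hB).mp hb
    obtain ⟨e', o', he', ho', hc', rfl⟩ := (merge_mem_iff hB).mp hb'
    have hne : e ≠ e' := by
      rintro rfl
      exact hbb (by rw [o_unique hB he ho ho' hc hc'])
    exact quartet_noncross hB he he' ho ho' hc hc' hne
  · -- card
    rw [mergeQuartets]
    rw [Finset.card_image_of_injOn, card_Be hB]
    intro e he e' he' heq
    simp only [Finset.coe_mem, Finset.mem_coe] at he he'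
    by_contra hne
    obtain ⟨o, ho, hc, hfil⟩ := quartet_spec hB he
    obtain ⟨o', ho', hc', hfil'⟩ := quartet_spec hB he'
    simp only [hfil, hfil', Finset.singleton_biUnion, id] at heq
    have hene : e.Nonempty := Finset.card_pos.mp (by rw [hB.1.1.1 e he]; omega)
    obtain ⟨x, hx⟩ := hene
    exact quartet_disjoint hB he he' ho ho' hc hc' hne x
      (Finset.mem_union_left _ hx) (heq ▸ Finset.mem_union_left _ hx)
  · -- sizes
    intro b hb
    obtain ⟨e, o, he, ho, hc, rfl⟩ := (merge_mem_iff hB).mp hb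
    rw [Finset.card_union_of_disjoint (hdisj' e o he ho), hB.1.1.1 e he,
      hB.2.1.1.1 o ho]

lemma exists_sorted_four {q : Finset ℕ} (hq : q.card = 4) :
    ∃ a b c d, a < b ∧ b < c ∧ c < d ∧ q = {a, b, c, d} := by
  have hlen : (q.sort (· ≤ ·)).length = 4 := by rw [Finset.length_sort, hq]
  have hsorted := (Finset.sortedLT_sort q).pairwise
  have htf : (q.sort (· ≤ ·)).toFinset = q := Finset.sort_toFinset q _
  match hl : q.sort (· ≤ ·), hlen with
  | [a, b, c, d], _ =>
    rw [hl] at hsorted htf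
    simp only [List.pairwise_cons, List.mem_cons, List.not_mem_nil] at hsorted
    refine ⟨a, b, c, d, ?_, ?_, ?_, ?_⟩
    · exact hsorted.1 b (by simp)
    · exact hsorted.2.1 c (by simp)
    · exact hsorted.2.2.1 d (by simp)
    · rw [← htf]
      ext x
      simp [List.toFinset_cons]

lemma gap_parity {n : ℕ} {Q : Finset (Finset ℕ)}
    (hQ : IsNCPartitionOn Q (Finset.range (4 * n))) (hQ4 : ∀ b ∈ Q, b.card = 4)
    {q : Finset ℕ} (hq : q ∈ Q) {u v : ℕ} (hu : u ∈ q) (hv : v ∈ q) (huv : u < v)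
    (hcons : ∀ w ∈ q, ¬(u < w ∧ w < v)) : (v - u) % 2 = 1 := by
  have claim : ∀ q' ∈ Q, ∀ x ∈ q', x ∈ Finset.Ioo u v → q' ⊆ Finset.Ioo u v := by
    intro q' hq' x hx hxI
    simp only [Finset.mem_Ioo] at hxI
    have hne : q ≠ q' := by
      rintro rfl
      exact hcons x hx hxI
    intro y hy
    simp only [Finset.mem_Ioo]
    by_contra hyI
    have hdis := hQ.2.1 q hq q' hq' hne
    have hyu : y ≠ u := fun h => Finset.disjoint_right.mp hdis hy (h ▸ hu)
    have hyv : y ≠ v := fun h => Finset.disjoint_right.mp hdis hy (h ▸ hv)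
    refine hQ.2.2.2 q hq q' hq' hne ?_
    rcases (by omega : y < u ∨ v < y) with h | h
    · exact Or.inr ⟨y, hy, x, hx, u, hu, v, hv, by omega, by omega, by omega⟩
    · exact Or.inl ⟨u, hu, v, hv, x, hx, y, hy, by omega, by omega, by omega⟩
  have hunion : Finset.Ioo u v
      = (Q.filter (fun q' => q' ⊆ Finset.Ioo u v)).biUnion (fun b => b) := by
    ext x
    simp only [Finset.mem_biUnion, Finset.mem_filter]
    constructor
    · intro hx
      have hvr : v < 4 * n := Finset.mem_range.mp ((hQ.2.2.1 v).mpr ⟨q, hq, hv⟩)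
      have hxr : x ∈ Finset.range (4 * n) := by
        simp only [Finset.mem_Ioo] at hx
        exact Finset.mem_range.mpr (by omega)
      obtain ⟨q', hq', hxq⟩ := (hQ.2.2.1 x).mp hxr
      exact ⟨q', ⟨hq', claim q' hq' x hxq hx⟩, hxq⟩
    · rintro ⟨q', ⟨_, hsub⟩, hx⟩
      exact hsub hx
  have hcard : v - u - 1 = 4 * (Q.filter (fun q' => q' ⊆ Finset.Ioo u v)).card := by
    have h2 := congrArg Finset.card hunion
    rw [Nat.card_Ioo] at h2
    rw [h2, Finset.card_biUnion (fun b hb b' hb' hne =>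
      hQ.2.1 b (Finset.mem_filter.mp hb).1 b' (Finset.mem_filter.mp hb').1 hne)]
    rw [Finset.sum_congr rfl (fun b hb => hQ4 b (Finset.mem_filter.mp hb).1),
      Finset.sum_const, smul_eq_mul]
    ring
  omega

noncomputable def evensOf (q : Finset ℕ) : Finset ℕ := q.filter (fun x => x % 2 = 0)
noncomputable def oddsOf (q : Finset ℕ) : Finset ℕ := q.filter (fun x => x % 2 = 1)

lemma evens_union_odds (q : Finset ℕ) : evensOf q ∪ oddsOf q = q := by
  ext x
  simp only [evensOf, oddsOf, Finset.mem_union, Finset.mem_filter]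
  by_cases hx : x ∈ q <;> simp [hx] <;> omega

lemma block_split {n : ℕ} {Q : Finset (Finset ℕ)}
    (hQ : IsNCPartitionOn Q (Finset.range (4 * n))) (hQ4 : ∀ b ∈ Q, b.card = 4)
    {q : Finset ℕ} (hq : q ∈ Q) :
    ∃ a b c d, a < b ∧ b < c ∧ c < d ∧ q = {a, b, c, d} ∧
      ((evensOf q = {a, c} ∧ oddsOf q = {b, d}) ∨
       (evensOf q = {b, d} ∧ oddsOf q = {a, c})) := by
  obtain ⟨a, b, c, d, hab, hbc, hcd, rfl⟩ := exists_sorted_four (hQ4 q hq)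
  have hmem : ∀ x, x ∈ ({a, b, c, d} : Finset ℕ) ↔ (x = a ∨ x = b ∨ x = c ∨ x = d) := by
    intro x; simp
  have g1 : (b - a) % 2 = 1 := by
    refine gap_parity hQ hQ4 hq ((hmem a).mpr (by tauto)) ((hmem b).mpr (by tauto)) hab ?_
    intro w hw
    rw [hmem] at hw
    omega
  have g2 : (c - b) % 2 = 1 := by
    refine gap_parity hQ hQ4 hq ((hmem b).mpr (by tauto)) ((hmem c).mpr (by tauto)) hbc ?_
    intro w hw
    rw [hmem] at hw
    omega
  have g3 : (d - c) % 2 = 1 := by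
    refine gap_parity hQ hQ4 hq ((hmem c).mpr (by tauto)) ((hmem d).mpr (by tauto)) hcd ?_
    intro w hw
    rw [hmem] at hw
    omega
  refine ⟨a, b, c, d, hab, hbc, hcd, rfl, ?_⟩
  by_cases hpar : a % 2 = 0
  · left
    constructor
    · ext x
      simp only [evensOf, Finset.mem_filter, Finset.mem_insert, Finset.mem_singleton]
      omega
    · ext x
      simp only [oddsOf, Finset.mem_filter, Finset.mem_insert, Finset.mem_singleton]
      omega
  · right
    constructor
    · ext x
      simp only [evensOf, Finset.mem_filter, Finset.mem_insert, Finset.mem_singleton]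
      omega
    · ext x
      simp only [oddsOf, Finset.mem_filter, Finset.mem_insert, Finset.mem_singleton]
      omega

lemma block_cross {n : ℕ} {Q : Finset (Finset ℕ)}
    (hQ : IsNCPartitionOn Q (Finset.range (4 * n))) (hQ4 : ∀ b ∈ Q, b.card = 4)
    {q : Finset ℕ} (hq : q ∈ Q) :
    (evensOf q).card = 2 ∧ (oddsOf q).card = 2 ∧ Cross (evensOf q) (oddsOf q) := by
  obtain ⟨a, b, c, d, hab, hbc, hcd, hqeq, hsplit⟩ := block_split hQ hQ4 hq
  rcases hsplit with ⟨hE, hO⟩ | ⟨hE, hO⟩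
  · refine ⟨by rw [hE]; exact Finset.card_pair (by omega),
      by rw [hO]; exact Finset.card_pair (by omega), ?_⟩
    rw [hE, hO]
    exact Or.inl ⟨a, by simp, c, by simp, b, by simp, d, by simp, hab, hbc, hcd⟩
  · refine ⟨by rw [hE]; exact Finset.card_pair (by omega),
      by rw [hO]; exact Finset.card_pair (by omega), ?_⟩
    rw [hE, hO]
    exact Or.inr ⟨a, by simp, c, by simp, b, by simp, d, by simp, hab, hbc, hcd⟩

lemma backward_dir {n : ℕ} {Q : Finset (Finset ℕ)}
    (hQ : IsNCPartitionOn Q (Finset.range (4 * n))) (hQn : Q.card = n)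
    (hQ4 : ∀ b ∈ Q, b.card = 4) :
    IsBasketball n (Q.image evensOf) (Q.image oddsOf) ∧
      mergeQuartets (Q.image evensOf, Q.image oddsOf) = Q := by
  have hEcard : ∀ q ∈ Q, (evensOf q).card = 2 := fun q hq => (block_cross hQ hQ4 hq).1
  have hOcard : ∀ q ∈ Q, (oddsOf q).card = 2 := fun q hq => (block_cross hQ hQ4 hq).2.1
  have hCross : ∀ q ∈ Q, Cross (evensOf q) (oddsOf q) :=
    fun q hq => (block_cross hQ hQ4 hq).2.2
  have hpartNC : ∀ q ∈ Q, ∀ q' ∈ Q, q ≠ q' → ∀ (X Y : Finset ℕ), X ⊆ q → Y ⊆ q' →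
      ¬ Cross X Y :=
    fun q hq q' hq' hne X Y hX hY h => hQ.2.2.2 q hq q' hq' hne (cross_mono hX hY h)
  have hfil : ∀ q ∈ Q,
      (Q.image oddsOf).filter (fun o => Cross (evensOf q) o) = {oddsOf q} := by
    intro q hq
    ext o
    simp only [Finset.mem_filter, Finset.mem_image, Finset.mem_singleton]
    constructor
    · rintro ⟨⟨q', hq', rfl⟩, hc⟩
      by_contra hne'
      have hqq : q ≠ q' := fun h => hne' (by rw [h])
      exact hpartNC q hq q' hq' hqq _ _ (Finset.filter_subset _ _)
        (Finset.filter_subset _ _) hc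
    · rintro rfl
      exact ⟨⟨q, hq, rfl⟩, hCross q hq⟩
  refine ⟨⟨⟨⟨?_, ?_, ?_⟩, ?_⟩, ⟨⟨?_, ?_, ?_⟩, ?_⟩, ?_⟩, ?_⟩
  · rintro b hb
    obtain ⟨q, hq, rfl⟩ := Finset.mem_image.mp hb
    exact hEcard q hq
  · rintro b hb b' hb' hne
    obtain ⟨q, hq, rfl⟩ := Finset.mem_image.mp hb
    obtain ⟨q', hq', rfl⟩ := Finset.mem_image.mp hb'
    have hqq : q ≠ q' := fun h => hne (by rw [h])
    rw [Finset.disjoint_left]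
    intro x hx hx'
    exact Finset.disjoint_left.mp (hQ.2.1 q hq q' hq' hqq)
      (Finset.filter_subset _ _ hx) (Finset.filter_subset _ _ hx')
  · intro x
    rw [mem_En]
    constructor
    · rintro ⟨hpar, hx⟩
      obtain ⟨q, hq, hxq⟩ := (hQ.2.2.1 x).mp (Finset.mem_range.mpr hx)
      exact ⟨evensOf q, Finset.mem_image.mpr ⟨q, hq, rfl⟩,
        Finset.mem_filter.mpr ⟨hxq, hpar⟩⟩
    · rintro ⟨b, hb, hxb⟩
      obtain ⟨q, hq, rfl⟩ := Finset.mem_image.mp hb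
      have hxq := Finset.filter_subset _ _ hxb
      have hxr := Finset.mem_range.mp ((hQ.2.2.1 x).mpr ⟨q, hq, hxq⟩)
      exact ⟨(Finset.mem_filter.mp hxb).2, hxr⟩
  · rintro b hb b' hb' hne
    obtain ⟨q, hq, rfl⟩ := Finset.mem_image.mp hb
    obtain ⟨q', hq', rfl⟩ := Finset.mem_image.mp hb'
    have hqq : q ≠ q' := fun h => hne (by rw [h])
    exact hpartNC q hq q' hq' hqq _ _ (Finset.filter_subset _ _) (Finset.filter_subset _ _)
  · rintro b hb
    obtain ⟨q, hq, rfl⟩ := Finset.mem_image.mp hb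
    exact hOcard q hq
  · rintro b hb b' hb' hne
    obtain ⟨q, hq, rfl⟩ := Finset.mem_image.mp hb
    obtain ⟨q', hq', rfl⟩ := Finset.mem_image.mp hb'
    have hqq : q ≠ q' := fun h => hne (by rw [h])
    rw [Finset.disjoint_left]
    intro x hx hx'
    exact Finset.disjoint_left.mp (hQ.2.1 q hq q' hq' hqq)
      (Finset.filter_subset _ _ hx) (Finset.filter_subset _ _ hx')
  · intro x
    rw [mem_On]
    constructor
    · rintro ⟨hpar, hx⟩
      obtain ⟨q, hq, hxq⟩ := (hQ.2.2.1 x).mp (Finset.mem_range.mpr hx)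
      exact ⟨oddsOf q, Finset.mem_image.mpr ⟨q, hq, rfl⟩,
        Finset.mem_filter.mpr ⟨hxq, hpar⟩⟩
    · rintro ⟨b, hb, hxb⟩
      obtain ⟨q, hq, rfl⟩ := Finset.mem_image.mp hb
      have hxq := Finset.filter_subset _ _ hxb
      have hxr := Finset.mem_range.mp ((hQ.2.2.1 x).mpr ⟨q, hq, hxq⟩)
      exact ⟨(Finset.mem_filter.mp hxb).2, hxr⟩
  · rintro b hb b' hb' hne
    obtain ⟨q, hq, rfl⟩ := Finset.mem_image.mp hb
    obtain ⟨q', hq', rfl⟩ := Finset.mem_image.mp hb'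
    have hqq : q ≠ q' := fun h => hne (by rw [h])
    exact hpartNC q hq q' hq' hqq _ _ (Finset.filter_subset _ _) (Finset.filter_subset _ _)
  · rintro e he
    obtain ⟨q, hq, rfl⟩ := Finset.mem_image.mp he
    rw [hfil q hq]
    exact Finset.card_singleton _
  · simp only [mergeQuartets, Finset.image_image]
    have heq : Set.EqOn
        ((fun e => e ∪ ((Q.image oddsOf).filter (fun o => Cross e o)).biUnion id)
          ∘ evensOf) id ↑Q := by
      intro q hq
      simp only [Function.comp_apply, id]
      rw [hfil q hq, Finset.singleton_biUnion]
      exact evens_union_odds q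
    rw [Finset.image_congr heq, Finset.image_id]

lemma parts_of_union {n : ℕ} {Be Bo : Finset (Finset ℕ)} (hB : IsBasketball n Be Bo)
    {e o : Finset ℕ} (he : e ∈ Be) (ho : o ∈ Bo) :
    evensOf (e ∪ o) = e ∧ oddsOf (e ∪ o) = o := by
  constructor
  · ext x
    simp only [evensOf, Finset.mem_filter, Finset.mem_union]
    constructor
    · rintro ⟨hx | hx, hpar⟩
      · exact hx
      · have := odd_mem hB ho hx; omega
    · intro hx
      exact ⟨Or.inl hx, (even_mem hB he hx).1⟩
  · ext x
    simp only [oddsOf, Finset.mem_filter, Finset.mem_union]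
    constructor
    · rintro ⟨hx | hx, hpar⟩
      · have := even_mem hB he hx; omega
      · exact hx
    · intro hx
      exact ⟨Or.inr hx, (odd_mem hB ho hx).1⟩

lemma merge_recover {n : ℕ} {Be Bo : Finset (Finset ℕ)} (hB : IsBasketball n Be Bo) :
    (mergeQuartets (Be, Bo)).image evensOf = Be ∧
      (mergeQuartets (Be, Bo)).image oddsOf = Bo := by
  constructor
  · ext e
    simp only [Finset.mem_image]
    constructor
    · rintro ⟨b, hb, rfl⟩
      obtain ⟨e', o', he', ho', hc', rfl⟩ := (merge_mem_iff hB).mp hb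
      rw [(parts_of_union hB he' ho').1]
      exact he'
    · intro he
      obtain ⟨o, ho, hc, _⟩ := quartet_spec hB he
      exact ⟨e ∪ o, (merge_mem_iff hB).mpr ⟨e, o, he, ho, hc, rfl⟩,
        (parts_of_union hB he ho).1⟩
  · ext o
    simp only [Finset.mem_image]
    constructor
    · rintro ⟨b, hb, rfl⟩
      obtain ⟨e', o', he', ho', hc', rfl⟩ := (merge_mem_iff hB).mp hb
      rw [(parts_of_union hB he' ho').2]
      exact ho'
    · intro ho
      obtain ⟨e, he, hc⟩ := odd_pair_crossed hB ho
      exact ⟨e ∪ o, (merge_mem_iff hB).mpr ⟨e, o, he, ho, hc, rfl⟩,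
        (parts_of_union hB he ho).2⟩


theorem stmt_6 (n : ℕ) :
    Set.BijOn mergeQuartets
      {B : Finset (Finset ℕ) × Finset (Finset ℕ) | IsBasketball n B.1 B.2}
      {Q : Finset (Finset ℕ) |
        IsNCPartitionOn Q (Finset.range (4 * n)) ∧ Q.card = n ∧
        ∀ b ∈ Q, b.card = 4} := by
  refine ⟨?_, ?_, ?_⟩
  · intro B hB
    exact forward_dir hB
  · intro B hB B' hB' heq
    have hmm : mergeQuartets (B.1, B.2) = mergeQuartets (B'.1, B'.2) := heq
    have h1 := (merge_recover hB).1
    have h2 := (merge_recover hB).2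
    have h1' := (merge_recover hB').1
    have h2' := (merge_recover hB').2
    have e1 : B.1 = B'.1 := by rw [← h1, ← h1', hmm]
    have e2 : B.2 = B'.2 := by rw [← h2, ← h2', hmm]
    exact Prod.ext e1 e2
  · intro Q hQmem
    obtain ⟨hQ1, hQn, hQ4⟩ := hQmem
    obtain ⟨hb, hm⟩ := backward_dir hQ1 hQn hQ4
    exact ⟨(Q.image evensOf, Q.image oddsOf), hb, hm⟩
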